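/- Let G be a graph, let r ≥ 3, and suppose the family of vertex sets of r-cliques of G is {0,ℓ}-intersecting for some 0 < ℓ < r. Then for any edge A of the associated r-graph (i.e., any r-clique vertex set A) and any ℓ-set C ⊂ V(G) such that there is a sunflower of at least r² many r-clique vertex sets with core C, either C ⊂ A or C ∩ A = ∅. -/

import Mathlib

open SimpleGraph Finset

/-- If the `r`-cliques of `G` form a `{0,ℓ}`-intersecting family (with `r ≥ 3`,
`0 < ℓ < r`), `A` is an `r`-clique vertex set and `C` is an `ℓ`-set which is the core of
a sunflower of at least `r²` many `r`-clique vertex sets, then `C ⊆ A` or `C ∩ A = ∅`. -/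
theorem sunflower_core_in_or_disjoint {V : Type*} [DecidableEq V]
    (G : SimpleGraph V) (r ℓ : ℕ) (hr : 3 ≤ r) (hl0 : 0 < ℓ) (hlr : ℓ < r)
    (hinter : ∀ A B : Finset V, G.IsNClique r A → G.IsNClique r B → A ≠ B →
      (A ∩ B).card = 0 ∨ (A ∩ B).card = ℓ)
    (A : Finset V) (hA : G.IsNClique r A)
    (C : Finset V) (hC : C.card = ℓ)
    (S : Finset (Finset V)) (hS : ∀ X ∈ S, G.IsNClique r X)
    (hsun : ∀ X ∈ S, ∀ Y ∈ S, X ≠ Y → X ∩ Y = C)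
    (hScard : r ^ 2 ≤ S.card) :
    C ⊆ A ∨ C ∩ A = ∅ := by
  by_contra hcon
  push_neg at hcon
  obtain ⟨hCA, hne⟩ := hcon
  obtain ⟨v, hv⟩ := hne
  have hrr : r + 2 ≤ r ^ 2 := by nlinarith
  -- every member of S contains C
  have hCsub : ∀ X ∈ S, C ⊆ X := by
    intro X hX
    obtain ⟨Y, hY, hYX⟩ := Finset.exists_mem_ne (lt_of_lt_of_le (by nlinarith) hScard) X
    rw [← hsun X hX Y hY (Ne.symm hYX)]
    exact Finset.inter_subset_left
  -- members of S meeting A \ C are few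
  classical
  set T : Finset (Finset V) := S.filter (fun X => (X ∩ (A \ C)).Nonempty) with hT
  have hTcard : T.card ≤ (A \ C).card := by
    apply Finset.card_le_card_of_injOn
      (fun X => if h : (X ∩ (A \ C)).Nonempty then h.choose else v)
    · intro X hX
      simp only [hT, Finset.mem_coe, Finset.mem_filter] at hX
      beta_reduce
      rw [dif_pos hX.2]
      exact (Finset.mem_inter.mp hX.2.choose_spec).2
    · intro X hX Y hY hXY
      simp only [hT, Finset.mem_coe, Finset.mem_filter] at hX hY
      simp only at hXY
      rw [dif_pos hX.2, dif_pos hY.2] at hXY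
      by_contra hne'
      have h1 := Finset.mem_inter.mp hX.2.choose_spec
      have h2 := Finset.mem_inter.mp hY.2.choose_spec
      have : hX.2.choose ∈ X ∩ Y := Finset.mem_inter.mpr ⟨h1.1, hXY ▸ h2.1⟩
      rw [hsun X hX.1 Y hY.1 hne'] at this
      exact (Finset.mem_sdiff.mp h1.2).2 this
  have hAC : (A \ C).card ≤ r := le_trans (Finset.card_le_card (Finset.sdiff_subset)) hA.2.le
  -- find X in S, X ≠ A, X ∉ T
  have hbig : ((S \ (insert A T)).Nonempty) := by
    rw [← Finset.card_pos]
    have h1 : (insert A T).card ≤ r + 1 := by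
      calc (insert A T).card ≤ T.card + 1 := Finset.card_insert_le _ _
        _ ≤ r + 1 := by omega
    have := Finset.le_card_sdiff (insert A T) S
    omega
  obtain ⟨X, hX⟩ := hbig
  rw [Finset.mem_sdiff, Finset.mem_insert] at hX
  push_neg at hX
  obtain ⟨hXS, hXA, hXT⟩ := hX
  have hXnm : ¬ (X ∩ (A \ C)).Nonempty := by
    intro h
    exact hXT (Finset.mem_filter.mpr ⟨hXS, h⟩)
  -- X ∩ A = C ∩ A
  have heq : X ∩ A = C ∩ A := by
    apply Finset.Subset.antisymm
    · intro a ha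
      obtain ⟨haX, haA⟩ := Finset.mem_inter.mp ha
      by_contra hac
      have haC : a ∉ C := fun h => hac (Finset.mem_inter.mpr ⟨h, haA⟩)
      exact hXnm ⟨a, Finset.mem_inter.mpr ⟨haX, Finset.mem_sdiff.mpr ⟨haA, haC⟩⟩⟩
    · exact Finset.inter_subset_inter (hCsub X hXS) (Finset.Subset.refl A)
  have := hinter X A (hS X hXS) hA hXA
  rw [heq] at this
  rcases this with h0 | hl
  · rw [Finset.card_eq_zero] at h0
    simp [h0] at hv
  · have : C ∩ A = C := Finset.eq_of_subset_of_card_le Finset.inter_subset_left (by omega)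
    exact hCA (this ▸ Finset.inter_subset_right)
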